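/- arXiv:2205.14174 — 3 statements merged into one kernel-verified Lean document; each statement's English description precedes it below -/
import Mathlib

section
/- Let b > 0 and s ≥ 0, and let μ, μ' be real numbers with |μ − μ'| ≤ s. Then for every real x, the Laplace density with location μ and scale b satisfies (1/(2b))·exp(−|x − μ|/b) ≤ exp(s/b) · (1/(2b))·exp(−|x − μ'|/b). -/
/-- The Laplace density with location `μ` and scale `b`. -/
noncomputable def laplaceDensity (μ b : ℝ) (x : ℝ) : ℝ :=
  (1 / (2 * b)) * Real.exp (-|x - μ| / b)

/-- Pointwise density-ratio bound for the Laplace mechanism. -/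
theorem laplaceDensity_ratio_le (b s μ μ' : ℝ) (hb : 0 < b) (hs : 0 ≤ s)
    (h : |μ - μ'| ≤ s) (x : ℝ) :
    laplaceDensity μ b x ≤ Real.exp (s / b) * laplaceDensity μ' b x := by
  unfold laplaceDensity
  rw [mul_comm (Real.exp (s / b)), mul_assoc, ← Real.exp_add]
  have h1 : |x - μ'| - |x - μ| ≤ s :=
    le_trans (by have := abs_sub_abs_le_abs_sub (x - μ') (x - μ); simpa [abs_sub_comm] using this)
      (by simpa [abs_sub_comm, show x - μ' - (x - μ) = μ - μ' by ring] using h)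
  have : -|x - μ| / b ≤ -|x - μ'| / b + s / b := by
    rw [← add_div, div_le_div_iff_of_pos_right hb]; linarith
  exact mul_le_mul_of_nonneg_left (Real.exp_le_exp.mpr this) (by positivity)
end

section
/- Let b > 0 and s ≥ 0, and let μ, μ' be real numbers with |μ − μ'| ≤ s. Let ν_μ and ν_{μ'} be the Laplace measures with locations μ and μ' and common scale b. Then for every measurable set S ⊆ ℝ, ν_μ(S) ≤ exp(s/b) · ν_{μ'}(S). -/
open MeasureTheory

/-- The Laplace measure with location `μ` and scale `b`: the measure on `ℝ` whose density
with respect to Lebesgue measure is the Laplace density. -/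
noncomputable def laplaceMeasure (μ b : ℝ) : Measure ℝ :=
  volume.withDensity (fun x => ENNReal.ofReal (laplaceDensity μ b x))

/-- The Laplace mechanism guarantee: if `|μ - μ'| ≤ s` then the Laplace measure at location `μ`
assigns every measurable set at most `exp(s/b)` times the mass assigned by the one at `μ'`. -/
theorem laplaceMeasure_apply_le (b s μ μ' : ℝ) (hb : 0 < b) (hs : 0 ≤ s)
    (h : |μ - μ'| ≤ s) (S : Set ℝ) (hS : MeasurableSet S) :
    laplaceMeasure μ b S ≤ ENNReal.ofReal (Real.exp (s / b)) * laplaceMeasure μ' b S := by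
  have key : ∀ x : ℝ, laplaceDensity μ b x ≤ Real.exp (s / b) * laplaceDensity μ' b x := by
    intro x
    unfold laplaceDensity
    rw [mul_comm (Real.exp (s/b)), mul_assoc]
    apply mul_le_mul_of_nonneg_left _ (by positivity)
    rw [← Real.exp_add]
    apply Real.exp_le_exp.2
    rw [← add_div, div_le_div_iff₀ hb hb]
    have h1 : |x - μ'| - |x - μ| ≤ s := by
      have := abs_sub_abs_le_abs_sub (x - μ') (x - μ)
      have h2 : |x - μ' - (x - μ)| = |μ - μ'| := by
        rw [show x - μ' - (x - μ) = -(μ' - μ) by ring, abs_neg, abs_sub_comm]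
      linarith
    nlinarith [abs_nonneg (x - μ), abs_nonneg (x - μ')]
  unfold laplaceMeasure
  rw [withDensity_apply _ hS, withDensity_apply _ hS, ← lintegral_const_mul' _ _
    (by exact ENNReal.ofReal_ne_top)]
  apply lintegral_mono
  intro x
  simp only []
  rw [← ENNReal.ofReal_mul (Real.exp_nonneg _)]
  exact ENNReal.ofReal_le_ofReal (key x)
end

section
/- Let b > 0 and let ν be the Laplace measure with location 0 and scale b. Then for every real λ with λ²b² ≤ 1/2, the moment generating function satisfies ∫ exp(λy) dν(y) ≤ exp(2λ²b²). -/
open MeasureTheory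

open Set in
lemma aux_integral_exp_neg_mul_Ioi {c : ℝ} (hc : 0 < c) :
    ∫ x in Ioi (0:ℝ), Real.exp (-(c * x)) = c⁻¹ := by
  have h := MeasureTheory.integral_comp_mul_left_Ioi (fun x => Real.exp (-x)) 0 hc
  simp only [mul_zero] at h
  rw [h, integral_exp_neg_Ioi_zero, smul_eq_mul, mul_one]

open Set in
lemma aux_integrableOn_exp_mul_Iic {c : ℝ} (hc : 0 < c) :
    IntegrableOn (fun x => Real.exp (c * x)) (Iic (0:ℝ)) := by
  have A : MeasurableEmbedding fun x : ℝ => -x :=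
    (Homeomorph.neg ℝ).measurableEmbedding
  have h := exp_neg_integrableOn_Ioi 0 hc
  have : IntegrableOn (fun x : ℝ => Real.exp (c * x)) (Iic 0)
      (Measure.map (fun x : ℝ => -x) volume) := by
    rw [A.integrableOn_map_iff]
    simp only [Function.comp_def, neg_preimage, neg_Iic, neg_zero, mul_neg]
    refine (integrableOn_Ici_iff_integrableOn_Ioi).mpr ?_
    simpa [neg_mul] using h
  rwa [Measure.map_neg_eq_self (volume : Measure ℝ)] at this

open Set in
lemma aux_integral_exp_mul_Iic {c : ℝ} (hc : 0 < c) :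
    ∫ x in Iic (0:ℝ), Real.exp (c * x) = c⁻¹ := by
  have h := integral_comp_neg_Iic (0:ℝ) (fun x => Real.exp (-(c * x)))
  simp only [mul_neg, neg_neg, neg_zero] at h
  rw [h, aux_integral_exp_neg_mul_Ioi hc]

set_option maxHeartbeats 1000000 in
open Set in
/-- Sub-Gaussian-type bound on the Laplace moment generating function:
for `λ² b² ≤ 1/2`, `∫ exp(λ y) dν(y) ≤ exp(2 λ² b²)`. -/
theorem laplace_mgf_le (b : ℝ) (hb : 0 < b) (lam : ℝ) (hlam : lam ^ 2 * b ^ 2 ≤ 1 / 2) :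
    ∫ y, Real.exp (lam * y) ∂(laplaceMeasure 0 b) ≤ Real.exp (2 * lam ^ 2 * b ^ 2) := by
  have hlb : |lam| * b < 1 := by
    nlinarith [abs_nonneg lam, sq_abs lam, sq_nonneg (|lam| * b)]
  have hlam1 : lam < 1 / b := by
    rcases abs_lt.mp (by rwa [← lt_div_iff₀ hb] at hlb) with ⟨h1, h2⟩; exact h2
  have hlam2 : -(1 / b) < lam := by
    rcases abs_lt.mp (by rwa [← lt_div_iff₀ hb] at hlb) with ⟨h1, h2⟩; exact h1
  have hcp : 0 < 1 / b - lam := by linarith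
  have hcm : 0 < 1 / b + lam := by linarith
  -- density is nonneg and continuous
  have hdens_nonneg : ∀ x, 0 ≤ laplaceDensity 0 b x := fun x =>
    mul_nonneg (by positivity) (Real.exp_nonneg _)
  have hmeas : Measurable fun x => (laplaceDensity 0 b x).toNNReal := by
    apply Measurable.real_toNNReal
    unfold laplaceDensity
    exact (measurable_const.mul ((measurable_id.sub measurable_const).abs.neg.div_const b
      |>.exp))
  -- rewrite the integral wrt the withDensity measure
  have key : ∫ y, Real.exp (lam * y) ∂(laplaceMeasure 0 b)
      = ∫ y, laplaceDensity 0 b y * Real.exp (lam * y) := by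
    rw [laplaceMeasure]
    have : (fun x => ENNReal.ofReal (laplaceDensity 0 b x))
        = fun x => ((laplaceDensity 0 b x).toNNReal : ENNReal) := by
      ext x; simp [ENNReal.ofReal]
    rw [this, integral_withDensity_eq_integral_smul hmeas]
    congr 1; ext x
    simp [NNReal.smul_def, Real.coe_toNNReal _ (hdens_nonneg x)]
  -- the integrand as explicit exponentials on each half line
  have hfun : ∀ y : ℝ, laplaceDensity 0 b y * Real.exp (lam * y)
      = (1 / (2 * b)) * Real.exp (lam * y - |y| / b) := by
    intro y
    rw [laplaceDensity, sub_zero, mul_assoc, ← Real.exp_add]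
    ring_nf
  have hIoi_eq : ∀ y ∈ Ioi (0:ℝ), laplaceDensity 0 b y * Real.exp (lam * y)
      = (1 / (2 * b)) * Real.exp (-((1 / b - lam) * y)) := by
    intro y hy
    rw [hfun y, abs_of_pos hy]
    congr 1
    ring
  have hIic_eq : ∀ y ∈ Iic (0:ℝ), laplaceDensity 0 b y * Real.exp (lam * y)
      = (1 / (2 * b)) * Real.exp ((1 / b + lam) * y) := by
    intro y hy
    rw [hfun y, abs_of_nonpos hy]
    congr 1
    ring
  -- integrability on each half line
  have hint_Ioi : IntegrableOn (fun y => laplaceDensity 0 b y * Real.exp (lam * y)) (Ioi 0) := by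
    have h := (exp_neg_integrableOn_Ioi 0 hcp).const_mul (1 / (2 * b))
    simp only [neg_mul] at h
    exact MeasureTheory.IntegrableOn.congr_fun h
      (fun y hy => (hIoi_eq y hy).symm) measurableSet_Ioi
  have hint_Iic : IntegrableOn (fun y => laplaceDensity 0 b y * Real.exp (lam * y)) (Iic 0) := by
    exact MeasureTheory.IntegrableOn.congr_fun ((aux_integrableOn_exp_mul_Iic hcm).const_mul _)
      (fun y hy => (hIic_eq y hy).symm) measurableSet_Iic
  -- compute the integral
  have comp : ∫ y, laplaceDensity 0 b y * Real.exp (lam * y)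
      = (1 / (2 * b)) * ((1 / b + lam)⁻¹ + (1 / b - lam)⁻¹) := by
    rw [← intervalIntegral.integral_Iic_add_Ioi hint_Iic hint_Ioi]
    rw [setIntegral_congr_fun measurableSet_Iic hIic_eq,
      setIntegral_congr_fun measurableSet_Ioi hIoi_eq,
      integral_const_mul, integral_const_mul,
      aux_integral_exp_mul_Iic hcm, aux_integral_exp_neg_mul_Ioi hcp]
    ring
  have hval : (1 / (2 * b)) * ((1 / b + lam)⁻¹ + (1 / b - lam)⁻¹)
      = (1 - lam ^ 2 * b ^ 2)⁻¹ := by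
    have h1 : (1 / b + lam) ≠ 0 := ne_of_gt hcm
    have h2 : (1 / b - lam) ≠ 0 := ne_of_gt hcp
    have h3 : (1 - lam ^ 2 * b ^ 2) ≠ 0 := by nlinarith
    have h4 : (0:ℝ) < 1 + b * lam := by
      have := mul_pos hb hcm; have hb' : b ≠ 0 := hb.ne'; field_simp at this; nlinarith
    have h5 : (0:ℝ) < 1 - b * lam := by
      have := mul_pos hb hcp; have hb' : b ≠ 0 := hb.ne'; field_simp at this; nlinarith
    have e1 : (1 / b + lam)⁻¹ = b / (1 + b * lam) := by
      rw [show (1 / b + lam) = (1 + b * lam) / b by (field_simp; try ring), inv_div]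
    have e2 : (1 / b - lam)⁻¹ = b / (1 - b * lam) := by
      rw [show (1 / b - lam) = (1 - b * lam) / b by (field_simp; try ring), inv_div]
    rw [e1, e2]
    field_simp [h4.ne', h5.ne']
    have h3' : (1 - b ^ 2 * lam ^ 2) ≠ 0 := fun h => h3 (by linarith)
    rw [eq_div_iff h3']
    ring
  rw [key, comp, hval, show 2 * lam ^ 2 * b ^ 2 = 2 * (lam ^ 2 * b ^ 2) by ring]
  -- final inequality: (1 - t)⁻¹ ≤ exp (2 t) for 0 ≤ t ≤ 1/2
  set t := lam ^ 2 * b ^ 2 with ht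
  have ht0 : 0 ≤ t := by positivity
  have ht1 : 0 < 1 - t := by linarith
  have hexp : 1 + 2 * t ≤ Real.exp (2 * t) := by
    have := Real.add_one_le_exp (2 * t); linarith
  rw [inv_le_iff_one_le_mul₀ ht1]
  nlinarith [mul_le_mul_of_nonneg_right hexp (le_of_lt ht1)]
end
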